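/- Define the linear functional L_p on real-valued functions on EVEN_n determined on the monomial basis by L_p(e_I) = ∏_{i∈I} p_i for |I| < n/2 (and L_p((e_I+e_{Iᶜ})/2) = 0 if |I| = n/2 when n is even), where p = (1,…,1,−1) ∈ ℝⁿ. Then for any subsets I, J ⊆ [n] with |I|, |J| < n/4, one has L_p(e_I·e_J) = L_p(e_I)·L_p(e_J). -/

import Mathlib

/-- The set `EVEN_n` of `±1` vectors with an even number of `-1`'s, as a type. -/
def EvenPt (n : ℕ) : Type :=
  {x : Fin n → ℝ // (∀ i, x i = 1 ∨ x i = -1) ∧ ∏ i, x i = 1}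

/-- The point `p = (1, …, 1, -1)`. -/
def pVec (n : ℕ) : Fin n → ℝ := fun i => if (i : ℕ) = n - 1 then -1 else 1

lemma prod_mul_prod_symmDiff {n : ℕ} (x : Fin n → ℝ) (hx : ∀ i, x i = 1 ∨ x i = -1)
    (I J : Finset (Fin n)) :
    (∏ i ∈ I, x i) * ∏ i ∈ J, x i = ∏ i ∈ symmDiff I J, x i := by
  have hsq : ∀ i ∈ I ∩ J, x i * x i = 1 := by
    intro i _
    rcases hx i with h | h <;> rw [h] <;> norm_num
  have hI' : (∏ i ∈ I \ (I ∩ J), x i) * ∏ i ∈ I ∩ J, x i = ∏ i ∈ I, x i :=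
    Finset.prod_sdiff Finset.inter_subset_left
  have hJ' : (∏ i ∈ J \ (I ∩ J), x i) * ∏ i ∈ I ∩ J, x i = ∏ i ∈ J, x i :=
    Finset.prod_sdiff Finset.inter_subset_right
  have hIs : I \ (I ∩ J) = I \ J := by
    ext i; simp [Finset.mem_sdiff, Finset.mem_inter]
  have hJs : J \ (I ∩ J) = J \ I := by
    ext i; simp [Finset.mem_sdiff, Finset.mem_inter]
  have hdisj : Disjoint (I \ J) (J \ I) := disjoint_sdiff_sdiff
  have hsym : symmDiff I J = (I \ J) ∪ (J \ I) := rfl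
  rw [← hI', ← hJ', hIs, hJs, hsym, Finset.prod_union hdisj]
  have : (∏ i ∈ I ∩ J, x i) * ∏ i ∈ I ∩ J, x i = 1 := by
    rw [← Finset.prod_mul_distrib]
    exact Finset.prod_eq_one hsq
  linear_combination (∏ i ∈ I \ J, x i) * (∏ i ∈ J \ I, x i) * this

lemma pVec_pm {n : ℕ} (i : Fin n) : pVec n i = 1 ∨ pVec n i = -1 := by
  unfold pVec; split <;> simp

theorem Lp_multiplicative_on_low_degree (n : ℕ)
    (L : (EvenPt n → ℝ) →ₗ[ℝ] ℝ)
    (hL1 : ∀ I : Finset (Fin n), 2 * I.card < n →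
      L (fun x => ∏ i ∈ I, x.1 i) = ∏ i ∈ I, pVec n i)
    (hL2 : ∀ I : Finset (Fin n), 2 * I.card = n →
      L (fun x => ((∏ i ∈ I, x.1 i) + ∏ i ∈ Iᶜ, x.1 i) / 2) = 0)
    (I J : Finset (Fin n)) (hI : 4 * I.card < n) (hJ : 4 * J.card < n) :
    L (fun x => (∏ i ∈ I, x.1 i) * ∏ i ∈ J, x.1 i) =
      L (fun x => ∏ i ∈ I, x.1 i) * L (fun x => ∏ i ∈ J, x.1 i) := by
  have hfun : (fun x : EvenPt n => (∏ i ∈ I, x.1 i) * ∏ i ∈ J, x.1 i) =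
      fun x : EvenPt n => ∏ i ∈ symmDiff I J, x.1 i := by
    funext x
    exact prod_mul_prod_symmDiff x.1 x.2.1 I J
  have hcard : 2 * (symmDiff I J).card < n := by
    have hsub : symmDiff I J ⊆ I ∪ J := by
      intro i hi
      rw [Finset.mem_union]
      rw [symmDiff_def, Finset.sup_eq_union, Finset.mem_union, Finset.mem_sdiff,
        Finset.mem_sdiff] at hi
      tauto
    have h := (Finset.card_le_card hsub).trans (Finset.card_union_le I J)
    omega
  have hIc : 2 * I.card < n := by omega
  have hJc : 2 * J.card < n := by omega
  rw [hfun, hL1 _ hcard, hL1 _ hIc, hL1 _ hJc]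
  exact (prod_mul_prod_symmDiff (pVec n) pVec_pm I J).symm
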